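/- Assume k has characteristic zero. Let U and V be additive (abelian group)-valued k-functors. Then Ext^1(U, V) = 0: every exact sequence 0 → V → E →^π U → 0 of (abelian group)-valued k-functors splits by a morphism σ : U → E of (abelian group)-valued k-functors with π ∘ σ = id. -/

import Mathlib

universe u

open TensorProduct

/-- An (abelian group)-valued `k`-functor: a functor from commutative `k`-algebras
(in universe `u`) to abelian groups. -/
structure AbFunctor (k : Type u) [Field k] : Type (u + 1) where
  obj : ∀ (B : Type u) [CommRing B] [Algebra k B], Type u
  [grp : ∀ (B : Type u) [CommRing B] [Algebra k B], AddCommGroup (obj B)]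
  map : ∀ {B C : Type u} [CommRing B] [Algebra k B] [CommRing C] [Algebra k C],
    (B →ₐ[k] C) → (obj B →+ obj C)
  map_id : ∀ (B : Type u) [CommRing B] [Algebra k B],
    map (AlgHom.id k B) = AddMonoidHom.id (obj B)
  map_comp : ∀ {B C D : Type u} [CommRing B] [Algebra k B] [CommRing C] [Algebra k C]
    [CommRing D] [Algebra k D] (f : B →ₐ[k] C) (g : C →ₐ[k] D),
    map (g.comp f) = (map g).comp (map f)

attribute [instance] AbFunctor.grp

variable (k : Type u) [Field k]

/-- A morphism of (abelian group)-valued `k`-functors. -/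
structure AbHom (F G : AbFunctor k) where
  app : ∀ (B : Type u) [CommRing B] [Algebra k B], F.obj B →+ G.obj B
  naturality : ∀ {B C : Type u} [CommRing B] [Algebra k B] [CommRing C] [Algebra k C]
    (f : B →ₐ[k] C) (x : F.obj B), G.map f (app B x) = app C (F.map f x)

/-- A natural transformation of the underlying set-valued functors
(not required to be additive). -/
structure SetHom (F G : AbFunctor k) where
  app : ∀ (B : Type u) [CommRing B] [Algebra k B], F.obj B → G.obj B
  naturality : ∀ {B C : Type u} [CommRing B] [Algebra k B] [CommRing C] [Algebra k C]
    (f : B →ₐ[k] C) (x : F.obj B), G.map f (app B x) = app C (F.map f x)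

/-- An isomorphism of (abelian group)-valued `k`-functors. -/
structure AbIso (F G : AbFunctor k) where
  hom : AbHom k F G
  inv : AbHom k G F
  hom_inv : ∀ (B : Type u) [CommRing B] [Algebra k B] (x : F.obj B),
    inv.app B (hom.app B x) = x
  inv_hom : ∀ (B : Type u) [CommRing B] [Algebra k B] (x : G.obj B),
    hom.app B (inv.app B x) = x
/-- `𝔾_a^ι`, the direct sum of `ι` copies of the additive group functor,
`B ↦ ⊕_{i : ι} (B, +)`. -/
noncomputable def Ga (ι : Type u) : AbFunctor k where
  obj B _ _ := ι →₀ B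
  grp B _ _ := inferInstance
  map f := Finsupp.mapRange.addMonoidHom f.toRingHom.toAddMonoidHom
  map_id B _ _ := by
    ext x i
    simp [Finsupp.mapRange.addMonoidHom]
  map_comp f g := by
    ext x i
    rfl
/-- A functor is strictly additive if it is isomorphic to `𝔾_a^α` for some
`α ∈ {0, 1, …, ∞}`. -/
def IsStrictlyAdditive (F : AbFunctor k) : Prop :=
  (∃ n : ℕ, Nonempty (AbIso k F (Ga k (ULift.{u} (Fin n))))) ∨
    Nonempty (AbIso k F (Ga k (ULift.{u} ℕ)))
/-- `0 → F' → F → F'' → 0` is a short exact sequence of (abelian group)-valued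
`k`-functors (exactness is objectwise). -/
structure IsShortExact {F' F F'' : AbFunctor k} (i : AbHom k F' F)
    (p : AbHom k F F'') : Prop where
  inj : ∀ (B : Type u) [CommRing B] [Algebra k B], Function.Injective (i.app B)
  surj : ∀ (B : Type u) [CommRing B] [Algebra k B], Function.Surjective (p.app B)
  exact : ∀ (B : Type u) [CommRing B] [Algebra k B] (x : F.obj B),
    p.app B x = 0 ↔ x ∈ Set.range (i.app B)
/-- A functor is additive if it admits a finite filtration with strictly additive
successive quotients; equivalently (and as formalized here), the class of additive
functors is the smallest class containing the strictly additive functors and closed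
under extensions with strictly additive quotients. -/
inductive IsAdditive : AbFunctor k → Prop
  | of_strict (F : AbFunctor k) : IsStrictlyAdditive k F → IsAdditive F
  | of_ext {F' F F'' : AbFunctor k} (i : AbHom k F' F) (p : AbHom k F F'') :
      IsShortExact k i p → IsAdditive F' → IsStrictlyAdditive k F'' → IsAdditive F

set_option maxSynthPendingDepth 3
namespace ExtProof

open Polynomial

variable {k : Type u} [Field k]

/-- Composition of morphisms of functors. -/
def comp' {F G H : AbFunctor k} (g : AbHom k G H) (f : AbHom k F G) : AbHom k F H where
  app B _ _ := (g.app B).comp (f.app B)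
  naturality f' x := by
    simp only [AddMonoidHom.comp_apply, g.naturality, f.naturality]

@[simp] lemma comp'_app {F G H : AbFunctor k} (g : AbHom k G H) (f : AbHom k F G)
    (B : Type u) [CommRing B] [Algebra k B] (x : F.obj B) :
    (comp' g f).app B x = g.app B (f.app B x) := rfl

/-- The splitting property for a projection. -/
def Splits {E U : AbFunctor k} (pi : AbHom k E U) : Prop :=
  ∃ σ : AbHom k U E, ∀ (B : Type u) [CommRing B] [Algebra k B] (x : U.obj B),
    pi.app B (σ.app B x) = x

section Quot

variable {W E : AbFunctor k} (s : AbHom k W E)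

/-- Objectwise quotient of `E` by the image of `s`. -/
noncomputable def quotF : AbFunctor k where
  obj B _ _ := E.obj B ⧸ (s.app B).range
  grp B _ _ := inferInstance
  map {B C} _ _ _ _ f :=
    QuotientAddGroup.map _ _ (E.map f) (by
      rintro x ⟨w, rfl⟩
      exact ⟨W.map f w, (s.naturality f w).symm⟩)
  map_id B _ _ := by
    refine AddMonoidHom.ext fun x => ?_
    refine QuotientAddGroup.induction_on x fun e => ?_
    show QuotientAddGroup.mk (E.map (AlgHom.id k B) e) = _
    rw [E.map_id]
    rfl
  map_comp {B C D} _ _ _ _ _ _ f g := by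
    refine AddMonoidHom.ext fun x => ?_
    refine QuotientAddGroup.induction_on x fun e => ?_
    show QuotientAddGroup.mk (E.map (g.comp f) e) = _
    rw [E.map_comp]
    rfl

/-- The projection onto the quotient. -/
noncomputable def qhom : AbHom k E (quotF s) where
  app B _ _ := QuotientAddGroup.mk' _
  naturality {B C} _ _ _ _ f x := rfl

lemma qhom_surjective (B : Type u) [CommRing B] [Algebra k B] :
    Function.Surjective ((qhom s).app B) :=
  QuotientAddGroup.mk'_surjective _

lemma qhom_eq_zero_iff (B : Type u) [CommRing B] [Algebra k B] (x : E.obj B) :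
    (qhom s).app B x = 0 ↔ x ∈ Set.range (s.app B) := by
  rw [show ((qhom s).app B x = 0) ↔ _ from QuotientAddGroup.eq_zero_iff x]
  exact ⟨fun ⟨w, hw⟩ => ⟨w, hw⟩, fun ⟨w, hw⟩ => ⟨w, hw⟩⟩

/-- Descend a morphism killing the image of `s` to the quotient. -/
noncomputable def qdesc {Z : AbFunctor k} (g : AbHom k E Z)
    (hg : ∀ (B : Type u) [CommRing B] [Algebra k B] (w : W.obj B),
      g.app B (s.app B w) = 0) : AbHom k (quotF s) Z where
  app B _ _ := QuotientAddGroup.lift _ (g.app B) (by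
    rintro x ⟨w, rfl⟩
    exact hg B w)
  naturality {B C} _ _ _ _ f x :=
    QuotientAddGroup.induction_on x fun e => g.naturality f e

@[simp] lemma qdesc_qhom {Z : AbFunctor k} (g : AbHom k E Z) (hg)
    (B : Type u) [CommRing B] [Algebra k B] (x : E.obj B) :
    (qdesc s g hg).app B ((qhom s).app B x) = g.app B x := rfl

end Quot

section Pullback

variable {E Q U0 : AbFunctor k} (q : AbHom k E Q) (f : AbHom k U0 Q)

/-- The fiber-product subgroup. -/
def pbSub (B : Type u) [CommRing B] [Algebra k B] :
    AddSubgroup (E.obj B × U0.obj B) where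
  carrier := {p | q.app B p.1 = f.app B p.2}
  add_mem' := by
    intro a b ha hb
    simp only [Set.mem_setOf_eq, Prod.fst_add, Prod.snd_add, map_add] at *
    rw [ha, hb]
  zero_mem' := by simp
  neg_mem' := by
    intro a ha
    simp only [Set.mem_setOf_eq, Prod.fst_neg, Prod.snd_neg, map_neg] at *
    rw [ha]

/-- The pullback functor. -/
noncomputable def pbF : AbFunctor k where
  obj B _ _ := ↥(pbSub q f B)
  grp B _ _ := inferInstance
  map {B C} _ _ _ _ g :=
    AddMonoidHom.codRestrict
      (((E.map g).prodMap (U0.map g)).comp (pbSub q f B).subtype) (pbSub q f C)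
      (by
        rintro ⟨⟨e, u⟩, he⟩
        show q.app C (E.map g e) = f.app C (U0.map g u)
        rw [← q.naturality g e, ← f.naturality g u]
        show Q.map g (q.app B e) = Q.map g (f.app B u)
        rw [he])
  map_id B _ _ := by
    refine AddMonoidHom.ext fun x => Subtype.ext ?_
    show (E.map (AlgHom.id k B) x.1.1, U0.map (AlgHom.id k B) x.1.2) = x.1
    rw [E.map_id, U0.map_id]
    rfl
  map_comp {B C D} _ _ _ _ _ _ g h := by
    refine AddMonoidHom.ext fun x => Subtype.ext ?_
    show (E.map (h.comp g) x.1.1, U0.map (h.comp g) x.1.2) = _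
    rw [E.map_comp, U0.map_comp]
    rfl

/-- Build an element of the pullback. -/
def pbMk {B : Type u} [CommRing B] [Algebra k B] (e : E.obj B) (u : U0.obj B)
    (h : q.app B e = f.app B u) : (pbF q f).obj B :=
  show ↥(pbSub q f B) from ⟨(e, u), h⟩

/-- Second projection from the pullback. -/
noncomputable def pbSnd : AbHom k (pbF q f) U0 where
  app B _ _ := (AddMonoidHom.snd _ _).comp (pbSub q f B).subtype
  naturality {B C} _ _ _ _ g x := rfl

/-- First projection from the pullback. -/
noncomputable def pbFst : AbHom k (pbF q f) E where
  app B _ _ := (AddMonoidHom.fst _ _).comp (pbSub q f B).subtype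
  naturality {B C} _ _ _ _ g x := rfl

@[simp] lemma pbSnd_pbMk {B : Type u} [CommRing B] [Algebra k B] (e : E.obj B)
    (u : U0.obj B) (h) : (pbSnd q f).app B (pbMk q f e u h) = u := rfl

@[simp] lemma pbFst_pbMk {B : Type u} [CommRing B] [Algebra k B] (e : E.obj B)
    (u : U0.obj B) (h) : (pbFst q f).app B (pbMk q f e u h) = e := rfl

lemma pb_rel {B : Type u} [CommRing B] [Algebra k B] (x : (pbF q f).obj B) :
    q.app B ((pbFst q f).app B x) = f.app B ((pbSnd q f).app B x) :=
  (show ↥(pbSub q f B) from x).2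

lemma pb_ext {B : Type u} [CommRing B] [Algebra k B] (x y : (pbF q f).obj B)
    (h1 : (pbFst q f).app B x = (pbFst q f).app B y)
    (h2 : (pbSnd q f).app B x = (pbSnd q f).app B y) : x = y := by
  exact Subtype.ext (Prod.ext h1 h2)

end Pullback

end ExtProof
namespace ExtProof

section PolyTools

open Polynomial

variable {k : Type u} [Field k]

/-- Formal antiderivative with zero constant term. -/
noncomputable def antider [CharZero k] (p : Polynomial k) : Polynomial k :=
  p.sum fun n a => C (a / (n + 1)) * X ^ (n + 1)

lemma antider_zero [CharZero k] : antider (0 : Polynomial k) = 0 := by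
  simp [antider]

lemma derivative_antider [CharZero k] (p : Polynomial k) :
    derivative (antider p) = p := by
  unfold antider
  rw [Polynomial.sum_def, map_sum]
  have h : ∀ n ∈ p.support,
      derivative (C (p.coeff n / (n + 1)) * X ^ (n + 1)) = C (p.coeff n) * X ^ n := by
    intro n _
    rw [derivative_C_mul_X_pow]
    congr 2
    rw [Nat.cast_add, Nat.cast_one, div_mul_cancel₀]
    exact Nat.cast_add_one_ne_zero n
  rw [Finset.sum_congr rfl h]
  exact Polynomial.sum_C_mul_X_pow_eq p

lemma coeff_zero_antider [CharZero k] (p : Polynomial k) :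
    (antider p).coeff 0 = 0 := by
  unfold antider
  rw [Polynomial.sum_def, Polynomial.finset_sum_coeff]
  refine Finset.sum_eq_zero fun n _ => ?_
  rw [coeff_C_mul, coeff_X_pow]
  simp

lemma aeval_zero_eq {S : Type u} [CommRing S] [Algebra k S] (p : Polynomial k) :
    aeval (0 : S) p = algebraMap k S (p.coeff 0) := by
  rw [aeval_def, eval₂_at_zero]

/-- Chain rule for `aeval` into a polynomial ring. -/
lemma derivative_aeval {S : Type u} [CommRing S] [Algebra k S]
    (p : Polynomial k) (b : Polynomial S) :
    derivative (aeval b p) = aeval b (derivative p) * derivative b := by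
  have key : ∀ q : Polynomial k, (aeval b) q = (q.map (algebraMap k S)).comp b := by
    intro q
    rw [aeval_def, Polynomial.comp, eval₂_map,
      show (algebraMap k (Polynomial S)) = C.comp (algebraMap k S) from
        RingHom.ext fun r => Polynomial.algebraMap_apply r]
  rw [key, key, derivative_comp, derivative_map]
  ring

/-- The substitution `x ↦ a`, `y ↦ b` on `k[x][y]`. -/
noncomputable def psi {B : Type u} [CommRing B] [Algebra k B] (a b : B) :
    Polynomial (Polynomial k) →ₐ[k] B :=
  ((Polynomial.aeval b).restrictScalars k).comp (Polynomial.mapAlgHom (Polynomial.aeval a))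

lemma psi_apply {B : Type u} [CommRing B] [Algebra k B] (a b : B)
    (p : Polynomial (Polynomial k)) :
    psi a b p = eval₂ ((Polynomial.aeval a : Polynomial k →ₐ[k] B) : Polynomial k →+* B) b p := by
  show (Polynomial.aeval b) ((Polynomial.mapAlgHom (Polynomial.aeval a)) p) = _
  rw [coe_mapAlgHom]
  rw [show ((Polynomial.aeval b : Polynomial B →ₐ[B] B) ((map (Polynomial.aeval a : Polynomial k →ₐ[k] B) p : Polynomial B)))
    = eval b (map ((Polynomial.aeval a : Polynomial k →ₐ[k] B) : Polynomial k →+* B) p) from by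
      rw [← coe_aeval_eq_eval]]
  rw [eval_map]

lemma psi_CX {B : Type u} [CommRing B] [Algebra k B] (a b : B) :
    psi (k := k) a b (C X) = a := by
  rw [psi_apply, eval₂_C]
  exact aeval_X a

lemma psi_X {B : Type u} [CommRing B] [Algebra k B] (a b : B) :
    psi (k := k) a b X = b := by
  rw [psi_apply, eval₂_X]

lemma psi_at_zero {B : Type u} [CommRing B] [Algebra k B] (a : B)
    (p : Polynomial (Polynomial k)) :
    psi a 0 p = aeval a (p.coeff 0) := by
  rw [psi_apply, eval₂_at_zero]
  rfl

lemma aeval_C_poly {S : Type u} [CommRing S] [Algebra k S] (w : S) (q : Polynomial k) :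
    aeval (Polynomial.C w : Polynomial S) q = Polynomial.C (aeval w q) := by
  have := Polynomial.aeval_algHom_apply
    ((Polynomial.CAlgHom : S →ₐ[S] Polynomial S).restrictScalars k) w q
  simpa using this

lemma coeff1_psi_case1 {S : Type u} [CommRing S] [Algebra k S] (w : S)
    (A : Polynomial (Polynomial k)) :
    (psi (k := k) (Polynomial.C w) (X : Polynomial S) A).coeff 1 = aeval w (A.coeff 1) := by
  classical
  rw [psi_apply, eval₂_eq_sum, Polynomial.sum_def, Polynomial.finset_sum_coeff]
  simp only [RingHom.coe_coe]
  have h : ∀ n ∈ A.support,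
      ((aeval (Polynomial.C w) : Polynomial k →ₐ[k] Polynomial S) (A.coeff n) * X ^ n).coeff 1
        = if 1 = n then aeval w (A.coeff n) else 0 := by
    intro n _
    rw [show ((aeval (Polynomial.C w) : Polynomial k →ₐ[k] Polynomial S) (A.coeff n))
        = Polynomial.C (aeval w (A.coeff n)) from aeval_C_poly w _]
    rw [coeff_C_mul, coeff_X_pow]
    by_cases h1 : (1 : ℕ) = n <;> simp [h1]
  rw [Finset.sum_congr rfl h, Finset.sum_ite_eq]
  by_cases hmem : (1 : ℕ) ∈ A.support
  · simp [hmem]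
  · rw [if_neg hmem, Polynomial.notMem_support_iff.mp hmem]
    simp

lemma coeff_one_C_add_X_pow {S : Type u} [CommRing S] (w : S) (n : ℕ) :
    ((Polynomial.C w + X) ^ n).coeff 1 = n * w ^ (n - 1) := by
  have h1 : ((Polynomial.C w + X) ^ n).coeff 1
      = (derivative ((Polynomial.C w + X) ^ n)).coeff 0 := by
    rw [coeff_derivative]
    simp
  rw [h1, derivative_pow]
  rw [show derivative (Polynomial.C w + X) = 1 by simp]
  rw [mul_one, Polynomial.mul_coeff_zero, Polynomial.coeff_C_zero]
  rw [coeff_zero_eq_eval_zero]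
  simp [eval_pow]

lemma coeff1_psi_case3 (A : Polynomial (Polynomial k)) :
    (psi (k := k) (Polynomial.C (Polynomial.C X))
      (Polynomial.C X + X : Polynomial (Polynomial (Polynomial k))) A).coeff 1
      = derivative A := by
  classical
  rw [psi_apply, eval₂_eq_sum, Polynomial.sum_def, Polynomial.finset_sum_coeff]
  simp only [RingHom.coe_coe]
  have h : ∀ n ∈ A.support,
      ((aeval (Polynomial.C (Polynomial.C X)) : Polynomial k →ₐ[k] _) (A.coeff n)
        * (Polynomial.C X + X) ^ n).coeff 1
      = Polynomial.C (A.coeff n * (n : Polynomial k)) * X ^ (n - 1) := by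
    intro n _
    rw [show ((aeval (Polynomial.C (Polynomial.C X)) : Polynomial k →ₐ[k] _) (A.coeff n))
        = Polynomial.C (Polynomial.C (A.coeff n)) by
          rw [aeval_C_poly, aeval_C_poly, aeval_X_left_apply]]
    rw [coeff_C_mul, coeff_one_C_add_X_pow]
    rw [Polynomial.C_mul, Polynomial.C_eq_natCast]
    ring
  rw [Finset.sum_congr rfl h]
  rw [derivative_apply, Polynomial.sum_def]

lemma coeff1_psi_case4 {S : Type u} [CommRing S] [Algebra k S] (v w : S)
    (A : Polynomial (Polynomial k)) :
    (psi (k := k) (Polynomial.C v) (Polynomial.C w) A).coeff 1 = 0 := by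
  classical
  rw [psi_apply, eval₂_eq_sum, Polynomial.sum_def, Polynomial.finset_sum_coeff]
  simp only [RingHom.coe_coe]
  refine Finset.sum_eq_zero fun n _ => ?_
  rw [show ((aeval (Polynomial.C v) : Polynomial k →ₐ[k] Polynomial S) (A.coeff n))
      = Polynomial.C (aeval v (A.coeff n)) from aeval_C_poly v _]
  rw [← Polynomial.C_pow, ← Polynomial.C_mul, coeff_C]
  simp

/-- Integration of the infinitesimal cocycle identity. -/
lemma poly_key [CharZero k] (A : Polynomial (Polynomial k))
    (h0 : A.coeff 0 = 0)
    (hc : derivative A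
      = aeval (Polynomial.C X + X : Polynomial (Polynomial k)) (A.coeff 1)
        - aeval (X : Polynomial (Polynomial k)) (A.coeff 1)) :
    A = aeval (Polynomial.C X + X : Polynomial (Polynomial k)) (antider (A.coeff 1))
        - aeval (Polynomial.C X : Polynomial (Polynomial k)) (antider (A.coeff 1))
        - aeval (X : Polynomial (Polynomial k)) (antider (A.coeff 1)) := by
  set G := antider (A.coeff 1) with hG
  set Z := aeval (Polynomial.C X + X : Polynomial (Polynomial k)) G
      - aeval (Polynomial.C X : Polynomial (Polynomial k)) G
      - aeval (X : Polynomial (Polynomial k)) G with hZ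
  have hd : derivative (A - Z) = 0 := by
    rw [map_sub, hc, hZ, map_sub, map_sub]
    rw [derivative_aeval, derivative_aeval, derivative_aeval]
    rw [hG, derivative_antider]
    simp only [derivative_add, derivative_C, derivative_X, zero_add, mul_one, mul_zero]
    ring
  have hCF : A - Z = C ((A - Z).coeff 0) :=
    eq_C_of_natDegree_eq_zero (natDegree_eq_zero_of_derivative_eq_zero hd)
  have hev : (A - Z).coeff 0 = 0 := by
    -- evaluate the outer variable at 0 using the `k`-algebra map `aeval 0`
    have hker : ∀ p : Polynomial (Polynomial k),
        p.coeff 0 = (Polynomial.aeval (0 : Polynomial k)) p := by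
      intro p
      rw [coeff_zero_eq_eval_zero, coe_aeval_eq_eval]
    rw [hker, map_sub, ← hker A, h0, hZ]
    rw [map_sub, map_sub]
    have hsub : ∀ (w : Polynomial (Polynomial k)),
        (Polynomial.aeval (0 : Polynomial k)) (aeval w G)
          = aeval ((Polynomial.aeval (0 : Polynomial k)) w) G := by
      intro w
      exact (Polynomial.aeval_algHom_apply
        ((Polynomial.aeval (0 : Polynomial k) :
          Polynomial (Polynomial k) →ₐ[Polynomial k] Polynomial k).restrictScalars k) w G).symm
    rw [hsub, hsub, hsub]
    simp only [map_add, aeval_C, aeval_X]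
    rw [show (algebraMap (Polynomial k) (Polynomial k)) X + 0 = X by simp]
    rw [show (algebraMap (Polynomial k) (Polynomial k)) X = X by simp]
    rw [aeval_X_left_apply, aeval_zero_eq, hG, coeff_zero_antider, map_zero]
    ring
  have : A - Z = 0 := by rw [hCF, hev, map_zero]
  have := sub_eq_zero.mp this
  rw [this]
end PolyTools

end ExtProof
namespace ExtProof

section Core0

open Polynomial

variable {k : Type u} [Field k] [CharZero k] {ι κ : Type u} {E : AbFunctor k}

lemma ga_map_eq {τ B C : Type u} [CommRing B] [Algebra k B] [CommRing C] [Algebra k C]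
    (f : B →ₐ[k] C) (v : τ →₀ B) :
    (Ga k τ).map f v = Finsupp.mapRange (⇑f) (map_zero f) v := rfl

lemma ga_map_single {τ B C : Type u} [CommRing B] [Algebra k B] [CommRing C] [Algebra k C]
    (f : B →ₐ[k] C) (j : τ) (b : B) :
    (Ga k τ).map f (Finsupp.single j b) = (Finsupp.single j (f b) : τ →₀ C) := by
  rw [ga_map_eq]
  exact Finsupp.mapRange_single

set_option maxHeartbeats 1000000 in
lemma core0_component (i : AbHom k (Ga k κ) E) (pi : AbHom k E (Ga k ι))
    (hex : IsShortExact k i pi) (i0 : ι) :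
    ∃ sfun : ∀ (B : Type u) [CommRing B] [Algebra k B], B → E.obj B,
      (∀ (B : Type u) [CommRing B] [Algebra k B] (b : B),
        pi.app B (sfun B b) = (Finsupp.single i0 b : ι →₀ B)) ∧
      (∀ (B : Type u) [CommRing B] [Algebra k B] (x y : B),
        sfun B (x + y) = sfun B x + sfun B y) ∧
      (∀ (B C : Type u) [CommRing B] [Algebra k B] [CommRing C] [Algebra k C]
        (f : B →ₐ[k] C) (b : B), E.map f (sfun B b) = sfun C (f b)) := by
  classical
  obtain ⟨e0, he0⟩ := hex.surj (Polynomial k)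
    (Finsupp.single i0 X : (Ga k ι).obj (Polynomial k))
  set cz : Polynomial k →ₐ[k] Polynomial k := Polynomial.aeval 0 with hcz
  set e : E.obj (Polynomial k) := e0 - E.map cz e0 with he
  have hpie : pi.app (Polynomial k) e = (Finsupp.single i0 X : ι →₀ Polynomial k) := by
    rw [he, map_sub, he0, ← pi.naturality, he0, ga_map_single]
    rw [show cz X = 0 from by simp [hcz]]
    erw [Finsupp.single_zero, sub_zero]
  set sf : ∀ (B : Type u) [CommRing B] [Algebra k B], B → E.obj B :=
    fun B _ _ b => E.map (Polynomial.aeval b : Polynomial k →ₐ[k] B) e with hsf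
  have s_pi : ∀ (B : Type u) [CommRing B] [Algebra k B] (b : B),
      pi.app B (sf B b) = (Finsupp.single i0 b : ι →₀ B) := by
    intro B _ _ b
    show pi.app B (E.map (Polynomial.aeval b) e) = _
    rw [← pi.naturality, hpie, ga_map_single, Polynomial.aeval_X]
  have s_nat : ∀ (B C : Type u) [CommRing B] [Algebra k B] [CommRing C] [Algebra k C]
      (f : B →ₐ[k] C) (b : B), E.map f (sf B b) = sf C (f b) := by
    intro B C _ _ _ _ f b
    show E.map f (E.map (Polynomial.aeval b) e) = E.map (Polynomial.aeval (f b)) e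
    have h2 : E.map (f.comp (Polynomial.aeval b)) e
        = E.map f (E.map (Polynomial.aeval b) e) :=
      DFunLike.congr_fun (E.map_comp (Polynomial.aeval b) f) e
    rw [← h2, ← Polynomial.aeval_algHom]
  have s_zero : ∀ (B : Type u) [CommRing B] [Algebra k B], sf B (0 : B) = 0 := by
    intro B _ _
    show E.map (Polynomial.aeval (0 : B)) e = 0
    rw [he, map_sub]
    have h1 : E.map ((Polynomial.aeval (0 : B)).comp cz) e0
        = E.map (Polynomial.aeval (0 : B)) (E.map cz e0) :=
      DFunLike.congr_fun (E.map_comp cz (Polynomial.aeval (0 : B))) e0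
    have h2 : (Polynomial.aeval (0 : B)).comp cz = Polynomial.aeval (0 : B) :=
      Polynomial.algHom_ext (by simp [hcz])
    rw [← h1, h2, sub_self]
  -- the additivity defect, a symmetric 2-cocycle with values in `Ga k κ`
  have cexists : ∀ (B : Type u) [CommRing B] [Algebra k B] (x y : B),
      ∃ v : κ →₀ B, i.app B v = sf B (x + y) - sf B x - sf B y := by
    intro B _ _ x y
    refine (hex.exact B _).1 ?_
    rw [map_sub, map_sub, s_pi, s_pi, s_pi]
    erw [Finsupp.single_add, add_sub_cancel_left, sub_self]
  set cf : ∀ (B : Type u) [CommRing B] [Algebra k B], B → B → (κ →₀ B) :=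
    fun B _ _ x y => Classical.choose (cexists B x y) with hcf
  have cspec : ∀ (B : Type u) [CommRing B] [Algebra k B] (x y : B),
      i.app B (cf B x y) = sf B (x + y) - sf B x - sf B y :=
    fun B _ _ x y => Classical.choose_spec (cexists B x y)
  have c_nat : ∀ (B C : Type u) [CommRing B] [Algebra k B] [CommRing C] [Algebra k C]
      (f : B →ₐ[k] C) (x y : B),
      (Ga k κ).map f (cf B x y) = cf C (f x) (f y) := by
    intro B C _ _ _ _ f x y
    apply hex.inj C
    erw [← i.naturality, cspec, cspec]
    rw [map_sub, map_sub, s_nat, s_nat, s_nat, map_add]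
  have c_x0 : ∀ (B : Type u) [CommRing B] [Algebra k B] (x : B),
      cf B x 0 = (0 : κ →₀ B) := by
    intro B _ _ x
    apply hex.inj B
    erw [cspec, map_zero, add_zero, s_zero]
    abel
  have c_cocycle : ∀ (B : Type u) [CommRing B] [Algebra k B] (x y z : B),
      cf B y z - cf B (x + y) z + cf B x (y + z) - cf B x y = (0 : κ →₀ B) := by
    intro B _ _ x y z
    apply hex.inj B
    erw [map_zero, map_sub, map_add, map_sub, cspec, cspec, cspec, cspec]
    rw [show x + (y + z) = x + y + z from (add_assoc x y z).symm]
    abel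
  -- universal cocycle element in `Ga k κ` of `k[x][y]`
  set CC : κ →₀ Polynomial (Polynomial k) :=
    cf (Polynomial (Polynomial k)) (Polynomial.C X) X with hCC
  have c_univ : ∀ (B : Type u) [CommRing B] [Algebra k B] (a b : B),
      cf B a b = (Ga k κ).map (psi a b) CC := by
    intro B _ _ a b
    rw [hCC, c_nat _ _ (psi a b), psi_CX, psi_X]
  have hA0 : ∀ j : κ, (CC j).coeff 0 = 0 := by
    intro j
    have h1 := c_x0 (Polynomial k) X
    rw [c_univ] at h1
    have h2 := congrArg (fun v : κ →₀ Polynomial k => v j) h1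
    simp only [Finsupp.zero_apply] at h2
    rw [ga_map_eq, Finsupp.mapRange_apply, psi_at_zero, aeval_X_left_apply] at h2
    exact h2
  have hA1 : ∀ j : κ, derivative (CC j)
      = aeval (Polynomial.C X + X : Polynomial (Polynomial k)) ((CC j).coeff 1)
        - aeval (X : Polynomial (Polynomial k)) ((CC j).coeff 1) := by
    intro j
    have h1 := c_cocycle (Polynomial (Polynomial (Polynomial k)))
      (Polynomial.C (Polynomial.C X)) (Polynomial.C X) X
    rw [c_univ, c_univ, c_univ, c_univ] at h1
    rw [show (Polynomial.C (Polynomial.C X) + Polynomial.C X :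
        Polynomial (Polynomial (Polynomial k)))
      = Polynomial.C (Polynomial.C X + X) from (map_add Polynomial.C _ _).symm] at h1
    set L : (κ →₀ Polynomial (Polynomial (Polynomial k))) →+ Polynomial (Polynomial k) :=
      ((Polynomial.lcoeff (Polynomial (Polynomial k)) 1).toAddMonoidHom).comp
        (Finsupp.applyAddHom j) with hLdef
    have h3 := congrArg L h1
    erw [map_sub, map_add, map_sub, map_zero] at h3
    have hL : ∀ v : κ →₀ Polynomial (Polynomial (Polynomial k)),
        L v = (v j).coeff 1 := fun v => rfl
    erw [hL, hL, hL, hL] at h3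
    simp only [ga_map_eq, Finsupp.mapRange_apply] at h3
    rw [coeff1_psi_case1, coeff1_psi_case1, coeff1_psi_case3, coeff1_psi_case4] at h3
    linear_combination h3
  -- the coboundary
  set Φ : Polynomial (Polynomial k) → Polynomial k := fun A => antider (A.coeff 1) with hΦ
  have hΦ0 : Φ 0 = 0 := by simp [hΦ, antider_zero]
  set ghat : κ →₀ Polynomial k := Finsupp.mapRange Φ hΦ0 CC with hghat
  set gf : ∀ (B : Type u) [CommRing B] [Algebra k B], B → (κ →₀ B) :=
    fun B _ _ b => (Ga k κ).map (Polynomial.aeval b : Polynomial k →ₐ[k] B) ghat with hgf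
  have g_nat : ∀ (B C : Type u) [CommRing B] [Algebra k B] [CommRing C] [Algebra k C]
      (f : B →ₐ[k] C) (b : B), (Ga k κ).map f (gf B b) = gf C (f b) := by
    intro B C _ _ _ _ f b
    show (Ga k κ).map f ((Ga k κ).map (Polynomial.aeval b) ghat)
      = (Ga k κ).map (Polynomial.aeval (f b)) ghat
    have h2 : (Ga k κ).map (f.comp (Polynomial.aeval b)) ghat
        = (Ga k κ).map f ((Ga k κ).map (Polynomial.aeval b) ghat) :=
      DFunLike.congr_fun ((Ga k κ).map_comp (Polynomial.aeval b) f) ghat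
    rw [← h2, ← Polynomial.aeval_algHom]
  have g_delta : ∀ (B : Type u) [CommRing B] [Algebra k B] (x y : B),
      gf B (x + y) - gf B x - gf B y = cf B x y := by
    intro B _ _ x y
    rw [c_univ]
    refine Finsupp.ext fun j => ?_
    have hkey := poly_key (CC j) (hA0 j) (hA1 j)
    have h3 := congrArg (psi (k := k) x y) hkey
    rw [map_sub, map_sub] at h3
    have hsubst : ∀ w : Polynomial (Polynomial k),
        psi (k := k) x y (aeval w (antider ((CC j).coeff 1)))
          = aeval (psi (k := k) x y w) (antider ((CC j).coeff 1)) :=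
      fun w => (Polynomial.aeval_algHom_apply (psi (k := k) x y) w _).symm
    rw [hsubst, hsubst, hsubst, map_add, psi_CX, psi_X] at h3
    simp only [Finsupp.sub_apply]
    simp only [hgf, ga_map_eq, Finsupp.mapRange_apply]
    rw [hghat, Finsupp.mapRange_apply]
    simp only [hΦ]
    rw [h3]
  -- the corrected, additive and natural section
  refine ⟨fun B _ _ b => sf B b - i.app B (gf B b), ?_, ?_, ?_⟩
  · intro B _ _ b
    show pi.app B (sf B b - i.app B (gf B b)) = _
    rw [map_sub, s_pi]
    erw [show pi.app B (i.app B (gf B b)) = 0 from (hex.exact B _).2 ⟨_, rfl⟩, sub_zero]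
  · intro B _ _ x y
    show sf B (x + y) - i.app B (gf B (x + y))
      = (sf B x - i.app B (gf B x)) + (sf B y - i.app B (gf B y))
    have h1 := cspec B x y
    have h2 := g_delta B x y
    have h4 : gf B (x + y) = cf B x y + gf B x + gf B y := by
      rw [← h2]
      abel
    have h3 := congrArg (i.app B) h4
    erw [map_add, map_add] at h3
    rw [h3, h1]
    abel
  · intro B C _ _ _ _ f b
    show E.map f (sf B b - i.app B (gf B b)) = sf C (f b) - i.app C (gf C (f b))
    rw [map_sub, s_nat, i.naturality, g_nat]

end Core0

end ExtProof
namespace ExtProof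

variable {k : Type u} [Field k]

/-- Pulling back a short exact sequence along an arbitrary morphism. -/
lemma pb_shortExact {W E Q U0 : AbFunctor k} (iW : AbHom k W E) (q : AbHom k E Q)
    (hse : IsShortExact k iW q) (f : AbHom k U0 Q) :
    ∃ iP : AbHom k W (pbF q f), IsShortExact k iP (pbSnd q f) ∧
      ∀ (B : Type u) [CommRing B] [Algebra k B] (w : W.obj B),
        (pbFst q f).app B (iP.app B w) = iW.app B w := by
  have hq0 : ∀ (B : Type u) [CommRing B] [Algebra k B] (w : W.obj B),
      q.app B (iW.app B w) = f.app B 0 := by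
    intro B _ _ w
    rw [map_zero]
    exact (hse.exact B (iW.app B w)).2 ⟨w, rfl⟩
  refine ⟨⟨fun B _ _ => AddMonoidHom.mk' (fun w => pbMk q f (iW.app B w) 0 (hq0 B w))
      (fun a b => ?_), ?_⟩, ?_, ?_⟩
  · refine pb_ext q f _ _ ?_ ?_ <;>
      simp [map_add]
  · intro B C _ _ _ _ g w
    refine pb_ext q f _ _ ?_ ?_
    · rw [← (pbFst q f).naturality g]
      simp [(iW.naturality g)]
    · rw [← (pbSnd q f).naturality g]
      simp
  · constructor
    · intro B _ _ a b hab
      simp only [AddMonoidHom.mk'_apply] at hab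
      have := congrArg ((pbFst q f).app B) hab
      simp only [pbFst_pbMk] at this
      exact hse.inj B this
    · intro B _ _ u
      obtain ⟨e, he⟩ := hse.surj B (f.app B u)
      exact ⟨pbMk q f e u he, by simp⟩
    · intro B _ _ x
      constructor
      · intro hx
        have h2 : q.app B ((pbFst q f).app B x) = 0 := by
          rw [pb_rel q f x, hx, map_zero]
        obtain ⟨w, hw⟩ := (hse.exact B _).1 h2
        refine ⟨w, pb_ext q f _ _ ?_ ?_⟩
        · simpa using hw
        · simpa using hx.symm
      · rintro ⟨w, rfl⟩
        simp
  · intro B _ _ w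
    simp

/-- The core case: both ends strictly additive. -/
lemma core0 {ι κ : Type u} [CharZero k] {E : AbFunctor k}
    (i : AbHom k (Ga k κ) E) (pi : AbHom k E (Ga k ι))
    (hex : IsShortExact k i pi) : Splits pi := by
  classical
  have H := fun i0 : ι => core0_component i pi hex i0
  have hspec := fun i0 : ι => Classical.choose_spec (H i0)
  have hz : ∀ (i0 : ι) (B : Type u) [CommRing B] [Algebra k B],
      Classical.choose (H i0) B (0 : B) = 0 := by
    intro i0 B _ _
    have h := (hspec i0).2.1 B 0 0
    rw [add_zero] at h
    exact left_eq_add.mp h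
  refine ⟨⟨fun B _ _ => AddMonoidHom.mk'
      (fun x => (x : ι →₀ B).sum fun i0 b => Classical.choose (H i0) B b) ?_, ?_⟩, ?_⟩
  · intro x y
    exact Finsupp.sum_add_index' (fun i0 => hz i0 B) (fun i0 b1 b2 => (hspec i0).2.1 B b1 b2)
  · intro B C _ _ _ _ f x
    show E.map f ((x : ι →₀ B).sum fun i0 b => Classical.choose (H i0) B b)
      = ((Ga k ι).map f x : ι →₀ C).sum fun i0 b => Classical.choose (H i0) C b
    erw [map_finsuppSum]
    rw [show ((Ga k ι).map f x : ι →₀ C) = Finsupp.mapRange (⇑f) (map_zero f) x from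
      ga_map_eq f x]
    erw [Finsupp.sum_mapRange_index (fun i0 => hz i0 C)]
    exact Finsupp.sum_congr fun i0 _ => (hspec i0).2.2 B C f _
  · intro B _ _ x
    show pi.app B ((x : ι →₀ B).sum fun i0 b => Classical.choose (H i0) B b) = x
    erw [map_finsuppSum]
    exact Eq.trans (Finsupp.sum_congr fun i0 _ => (hspec i0).1 B _) (Finsupp.sum_single _)

lemma strict_iso {F : AbFunctor k} (h : IsStrictlyAdditive k F) :
    ∃ ι : Type u, Nonempty (AbIso k F (Ga k ι)) := by
  rcases h with ⟨n, h⟩ | h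
  · exact ⟨ULift.{u} (Fin n), h⟩
  · exact ⟨ULift.{u} ℕ, h⟩

lemma core_strict [CharZero k] {U V E : AbFunctor k} (hU : IsStrictlyAdditive k U)
    (hV : IsStrictlyAdditive k V) (i : AbHom k V E) (pi : AbHom k E U)
    (hex : IsShortExact k i pi) : Splits pi := by
  obtain ⟨ι, ⟨eU⟩⟩ := strict_iso hU
  obtain ⟨κ, ⟨eV⟩⟩ := strict_iso hV
  have hex' : IsShortExact k (comp' i eV.inv) (comp' eU.hom pi) := by
    constructor
    · intro B _ _ a b hab
      simp only [comp'_app] at hab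
      have h1 : eV.inv.app B a = eV.inv.app B b := hex.inj B hab
      have := congrArg (eV.hom.app B) h1
      simpa [eV.inv_hom] using this
    · intro B _ _ y
      obtain ⟨e, he⟩ := hex.surj B (eU.inv.app B y)
      refine ⟨e, ?_⟩
      simp [comp'_app, he, eU.inv_hom]
    · intro B _ _ x
      simp only [comp'_app]
      constructor
      · intro hx
        have hpix : pi.app B x = 0 := by
          have := congrArg (eU.inv.app B) hx
          simpa [eU.hom_inv] using this
        obtain ⟨v, hv⟩ := (hex.exact B x).1 hpix
        exact ⟨eV.hom.app B v, by simp [eV.hom_inv, hv]⟩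
      · rintro ⟨w, rfl⟩
        have h5 : pi.app B (i.app B (eV.inv.app B w)) = 0 :=
          (hex.exact B _).2 ⟨_, rfl⟩
        simp only [comp'_app]
        rw [h5, map_zero]
  obtain ⟨σ0, hσ0⟩ := core0 (comp' i eV.inv) (comp' eU.hom pi) hex'
  refine ⟨comp' σ0 eU.hom, ?_⟩
  intro B _ _ x
  have h1 := hσ0 B (eU.hom.app B x)
  simp only [comp'_app] at h1 ⊢
  have := congrArg (eU.inv.app B) h1
  simpa [eU.hom_inv] using this

lemma core1 [CharZero k] {U V E : AbFunctor k} (hU : IsStrictlyAdditive k U)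
    (hV : IsAdditive k V) (i : AbHom k V E) (pi : AbHom k E U)
    (hex : IsShortExact k i pi) : Splits pi := by
  induction hV generalizing E with
  | of_strict F hF => exact core_strict hU hF i pi hex
  | @of_ext F' F F'' iV' pV hVse hV' hV'' ih =>
    -- s : F' → E, the composite
    set s : AbHom k F' E := comp' i iV' with hs
    have hpis : ∀ (B : Type u) [CommRing B] [Algebra k B] (w : F'.obj B),
        pi.app B (s.app B w) = 0 := by
      intro B _ _ w
      exact (hex.exact B _).2 ⟨_, rfl⟩
    set qE := qhom s with hqE
    set pi'' : AbHom k (quotF s) U := qdesc s pi hpis with hpi''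
    -- jQ : F'' → quotF s
    have wd : ∀ (B : Type u) [CommRing B] [Algebra k B] (v w : F.obj B),
        pV.app B v = pV.app B w → qE.app B (i.app B v) = qE.app B (i.app B w) := by
      intro B _ _ v w hvw
      have h1 : pV.app B (v - w) = 0 := by rw [map_sub, hvw, sub_self]
      obtain ⟨v', hv'⟩ := (hVse.exact B _).1 h1
      have h2 : qE.app B (i.app B (v - w)) = 0 := by
        rw [← hv']
        exact (qhom_eq_zero_iff s B _).2 ⟨v', rfl⟩
      have h3 : qE.app B (i.app B v) - qE.app B (i.app B w) = 0 := by
        rw [← map_sub, ← map_sub]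
        exact h2
      exact sub_eq_zero.mp h3
    -- jQ : F'' → quotF s
    have jQex : ∀ (B : Type u) [CommRing B] [Algebra k B] (v'' : F''.obj B),
        ∃ v : F.obj B, pV.app B v = v'' := fun B _ _ v'' => hVse.surj B v''
    set jQfun : ∀ (B : Type u) [CommRing B] [Algebra k B], F''.obj B → (quotF s).obj B :=
      fun B _ _ v'' => qE.app B (i.app B (Classical.choose (jQex B v''))) with hjQfun
    have jQ_eq : ∀ (B : Type u) [CommRing B] [Algebra k B] (v : F.obj B),
        jQfun B (pV.app B v) = qE.app B (i.app B v) := by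
      intro B _ _ v
      exact wd B _ v (Classical.choose_spec (jQex B (pV.app B v)))
    have jQadd : ∀ (B : Type u) [CommRing B] [Algebra k B] (a b : F''.obj B),
        jQfun B (a + b) = jQfun B a + jQfun B b := by
      intro B _ _ a b
      obtain ⟨va, hva⟩ := jQex B a
      obtain ⟨vb, hvb⟩ := jQex B b
      rw [← hva, ← hvb, ← map_add, jQ_eq, jQ_eq, jQ_eq, map_add, map_add]
    set jQ : AbHom k F'' (quotF s) :=
      ⟨fun B _ _ => AddMonoidHom.mk' (jQfun B) (jQadd B), by
        intro B C _ _ _ _ g v''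
        obtain ⟨v, hv⟩ := jQex B v''
        simp only [AddMonoidHom.mk'_apply]
        rw [← hv, jQ_eq, pV.naturality, jQ_eq, ← i.naturality, ← qE.naturality]⟩ with hjQ
    have hjQ_app : ∀ (B : Type u) [CommRing B] [Algebra k B] (v : F.obj B),
        jQ.app B (pV.app B v) = qE.app B (i.app B v) := jQ_eq
    -- short exactness of jQ, pi''
    have hse2 : IsShortExact k jQ pi'' := by
      constructor
      · intro B _ _ a b hab
        obtain ⟨va, hva⟩ := jQex B a
        obtain ⟨vb, hvb⟩ := jQex B b
        rw [← hva, ← hvb] at hab ⊢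
        simp only [AddMonoidHom.mk'_apply, hjQ] at hab
        rw [jQ_eq, jQ_eq] at hab
        have h3 : qE.app B (i.app B (va - vb)) = 0 := by
          rw [map_sub, map_sub, hab, sub_self]
        obtain ⟨w', hw'⟩ := (qhom_eq_zero_iff s B _).1 h3
        have h4 : i.app B (iV'.app B w') = i.app B (va - vb) := hw'
        have h5 : iV'.app B w' = va - vb := hex.inj B h4
        have h6 : pV.app B (va - vb) = 0 := by
          rw [← h5]
          exact (hVse.exact B _).2 ⟨w', rfl⟩
        rw [map_sub] at h6
        exact sub_eq_zero.mp h6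
      · intro B _ _ u
        obtain ⟨e, he⟩ := hex.surj B u
        exact ⟨qE.app B e, by rw [qdesc_qhom, he]⟩
      · intro B _ _ y
        obtain ⟨x, rfl⟩ := qhom_surjective s B y
        constructor
        · intro hx
          have h1 : pi.app B x = 0 := hx
          obtain ⟨v, hv⟩ := (hex.exact B x).1 h1
          exact ⟨pV.app B v, by rw [hjQ_app, hv]⟩
        · rintro ⟨v'', hv''⟩
          rw [← hv'']
          obtain ⟨v, hv⟩ := jQex B v''
          rw [← hv]
          show pi''.app B (jQ.app B (pV.app B v)) = 0
          rw [hjQ_app, hpi'', qdesc_qhom]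
          exact (hex.exact B _).2 ⟨v, rfl⟩
    -- split the quotient extension
    obtain ⟨σ'', hσ''⟩ := core_strict hU hV'' jQ pi'' hse2
    -- short exactness of s, qE
    have hseEQ : IsShortExact k s qE := by
      constructor
      · intro B _ _ a b hab
        simp only [hs, comp'_app] at hab
        exact hVse.inj B (hex.inj B hab)
      · exact qhom_surjective s
      · exact qhom_eq_zero_iff s
    obtain ⟨iP, hiPse, hiPfst⟩ := pb_shortExact s qE hseEQ σ''
    obtain ⟨σP, hσP⟩ := ih iP (pbSnd qE σ'') hiPse
    refine ⟨comp' (pbFst qE σ'') σP, ?_⟩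
    intro B _ _ x
    simp only [comp'_app]
    have h1 : qE.app B ((pbFst qE σ'').app B (σP.app B x))
        = σ''.app B ((pbSnd qE σ'').app B (σP.app B x)) := pb_rel qE σ'' _
    rw [hσP B x] at h1
    have h2 := congrArg (pi''.app B) h1
    rw [hσ'' B x] at h2
    rw [hpi'', qdesc_qhom] at h2
    exact h2

lemma main [CharZero k] {U V E : AbFunctor k} (hU : IsAdditive k U) (hV : IsAdditive k V)
    (i : AbHom k V E) (pi : AbHom k E U) (hex : IsShortExact k i pi) : Splits pi := by
  induction hU generalizing E with
  | of_strict F hF => exact core1 hF hV i pi hex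
  | @of_ext F' F F'' jU pU hUse hU' hU'' ih =>
    have hpii : ∀ (B : Type u) [CommRing B] [Algebra k B] (v : V.obj B),
        pi.app B (i.app B v) = 0 := by
      intro B _ _ v
      exact (hex.exact B _).2 ⟨_, rfl⟩
    -- pull back along jU and split by the inductive hypothesis
    obtain ⟨iP1, hP1se, hP1fst⟩ := pb_shortExact i pi hex jU
    obtain ⟨σ1, hσ1⟩ := ih iP1 (pbSnd pi jU) hP1se
    set s' : AbHom k F' E := comp' (pbFst pi jU) σ1 with hs'
    have hs'pi : ∀ (B : Type u) [CommRing B] [Algebra k B] (x : F'.obj B),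
        pi.app B (s'.app B x) = jU.app B x := by
      intro B _ _ x
      have h1 := pb_rel pi jU (σ1.app B x)
      rw [hσ1 B x] at h1
      exact h1
    have hker : ∀ (B : Type u) [CommRing B] [Algebra k B] (x : F'.obj B),
        (comp' pU pi).app B (s'.app B x) = 0 := by
      intro B _ _ x
      simp only [comp'_app]
      rw [hs'pi B x]
      exact (hUse.exact B _).2 ⟨_, rfl⟩
    set qE := qhom s' with hqE
    set pi'' : AbHom k (quotF s') F'' := qdesc s' (comp' pU pi) hker with hpi''
    set iQ : AbHom k V (quotF s') := comp' qE i with hiQ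
    have hpi''qE : ∀ (B : Type u) [CommRing B] [Algebra k B] (e : E.obj B),
        pi''.app B (qE.app B e) = pU.app B (pi.app B e) := by
      intro B _ _ e
      rw [hpi'', hqE, qdesc_qhom, comp'_app]
    have hse2 : IsShortExact k iQ pi'' := by
      constructor
      · intro B _ _ a b hab
        simp only [hiQ, comp'_app] at hab
        have h3 : qE.app B (i.app B (a - b)) = 0 := by
          rw [map_sub, map_sub, hab, sub_self]
        obtain ⟨u', hu'⟩ := (qhom_eq_zero_iff s' B _).1 h3
        have h4 : pi.app B (s'.app B u') = 0 := by
          rw [hu']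
          exact hpii B _
        rw [hs'pi B u'] at h4
        have h5 : u' = 0 :=
          hUse.inj B (show jU.app B u' = jU.app B 0 by rw [h4, map_zero])
        rw [h5, map_zero] at hu'
        have h6 : a - b = 0 := hex.inj B (by rw [← hu', map_zero])
        have := sub_eq_zero.mp h6
        exact this
      · intro B _ _ u''
        obtain ⟨u, hu⟩ := hUse.surj B u''
        obtain ⟨e, he⟩ := hex.surj B u
        exact ⟨qE.app B e, by rw [hpi''qE, he, hu]⟩
      · intro B _ _ y
        obtain ⟨x, rfl⟩ := qhom_surjective s' B y
        constructor
        · intro hy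
          rw [hpi''qE] at hy
          obtain ⟨u', hu'⟩ := (hUse.exact B _).1 hy
          have h1 : pi.app B (x - s'.app B u') = 0 := by
            rw [map_sub, hs'pi B u', hu', sub_self]
          obtain ⟨v, hv⟩ := (hex.exact B _).1 h1
          refine ⟨v, ?_⟩
          simp only [hiQ, comp'_app]
          rw [hv, map_sub]
          have h2 : qE.app B (s'.app B u') = 0 :=
            (qhom_eq_zero_iff s' B _).2 ⟨u', rfl⟩
          rw [h2, sub_zero]
        · rintro ⟨v, hv⟩
          rw [← hv]
          simp only [hiQ, comp'_app]
          rw [show (pi''.app B) (qE.app B (i.app B v)) = _ from hpi''qE B _,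
            hpii, map_zero]
    obtain ⟨σ'', hσ''⟩ := core1 hU'' hV iQ pi'' hse2
    -- unique lifting property
    have uniq : ∀ (B : Type u) [CommRing B] [Algebra k B] (x : F.obj B) (e e' : E.obj B),
        (pi.app B e = x ∧ qE.app B e = σ''.app B (pU.app B x)) →
        (pi.app B e' = x ∧ qE.app B e' = σ''.app B (pU.app B x)) → e = e' := by
      intro B _ _ x e e' ⟨h1, h2⟩ ⟨h1', h2'⟩
      have hd1 : pi.app B (e - e') = 0 := by rw [map_sub, h1, h1', sub_self]
      obtain ⟨w, hw⟩ := (hex.exact B _).1 hd1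
      have hd2 : qE.app B (e - e') = 0 := by rw [map_sub, h2, h2', sub_self]
      rw [← hw] at hd2
      obtain ⟨u', hu'⟩ := (qhom_eq_zero_iff s' B _).1 hd2
      have h4 : pi.app B (s'.app B u') = 0 := by rw [hu', hpii]
      rw [hs'pi B u'] at h4
      have h5 : u' = 0 :=
        hUse.inj B (show jU.app B u' = jU.app B 0 by rw [h4, map_zero])
      rw [h5, map_zero] at hu'
      have h6 : e - e' = 0 := by rw [← hw, ← hu']
      exact sub_eq_zero.mp h6
    have key : ∀ (B : Type u) [CommRing B] [Algebra k B] (x : F.obj B),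
        ∃ e : E.obj B, pi.app B e = x ∧ qE.app B e = σ''.app B (pU.app B x) := by
      intro B _ _ x
      obtain ⟨e0, he0⟩ := hex.surj B x
      have hd : pi''.app B (qE.app B e0 - σ''.app B (pU.app B x)) = 0 := by
        rw [map_sub, hσ'', hpi''qE, he0, sub_self]
      obtain ⟨v, hv⟩ := (hse2.exact B _).1 hd
      refine ⟨e0 - i.app B v, ?_, ?_⟩
      · rw [map_sub, he0, hpii, sub_zero]
      · simp only [hiQ, comp'_app] at hv
        rw [map_sub, hv]
        abel
    classical
    set sfun : ∀ (B : Type u) [CommRing B] [Algebra k B], F.obj B → E.obj B :=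
      fun B _ _ x => Classical.choose (key B x) with hsfun
    have hspec : ∀ (B : Type u) [CommRing B] [Algebra k B] (x : F.obj B),
        pi.app B (sfun B x) = x ∧ qE.app B (sfun B x) = σ''.app B (pU.app B x) :=
      fun B _ _ x => Classical.choose_spec (key B x)
    have hadd : ∀ (B : Type u) [CommRing B] [Algebra k B] (x y : F.obj B),
        sfun B (x + y) = sfun B x + sfun B y := by
      intro B _ _ x y
      refine uniq B (x + y) _ _ (hspec B (x + y)) ⟨?_, ?_⟩
      · rw [map_add, (hspec B x).1, (hspec B y).1]
      · rw [map_add, (hspec B x).2, (hspec B y).2, ← map_add, ← map_add]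
    have hnat : ∀ {B C : Type u} [CommRing B] [Algebra k B] [CommRing C] [Algebra k C]
        (g : B →ₐ[k] C) (x : F.obj B),
        E.map g (sfun B x) = sfun C (F.map g x) := by
      intro B C _ _ _ _ g x
      refine uniq C (F.map g x) _ _ ⟨?_, ?_⟩ (hspec C (F.map g x))
      · rw [← pi.naturality, (hspec B x).1]
      · rw [← qE.naturality, (hspec B x).2, σ''.naturality, pU.naturality]
    refine ⟨⟨fun B _ _ => AddMonoidHom.mk' (sfun B) (hadd B), ?_⟩, ?_⟩
    · intro B C _ _ _ _ g x
      exact hnat g x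
    · intro B _ _ x
      exact (hspec B x).1

end ExtProof
/-- In characteristic zero, `Ext¹(U, V) = 0` for `U`, `V` additive:
every extension `0 → V → E → U → 0` splits. -/
theorem ext_additive_vanishes_char_zero {k : Type u} [Field k] [CharZero k]
    {U V E : AbFunctor k} (hU : IsAdditive k U) (hV : IsAdditive k V)
    (i : AbHom k V E) (pi : AbHom k E U) (hex : IsShortExact k i pi) :
    ∃ σ : AbHom k U E, ∀ (B : Type u) [CommRing B] [Algebra k B] (x : U.obj B),
      pi.app B (σ.app B x) = x := by
  obtain ⟨σ, hσ⟩ := ExtProof.main hU hV i pi hex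
  exact ⟨σ, hσ⟩
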